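/- Let (m_t), (v_t), (v̂_t) be defined from a gradient sequence (g_s) with |g_s| ≤ G by m_t = Σ_{s=1}^t (1−β_{1,s})(∏_{r=s+1}^t β_{1,r}) g_s, v_t = (1−β_2) Σ_{s=1}^t β_2^{t−s} g_s², and v̂_t ≥ v_t > 0, where (β_{1,s}) ⊆ [0,1) is non-increasing with β_{1,s} ≤ β_1, β_2 ∈ (0,1), and β_1² < β_2. Then for every t, m_t² / √(v̂_t) ≤ C(β_1,β_2) · √(v_t) ≤ C(β_1,β_2) · G, where C(β_1,β_2) = β_2/((1−β_2)(β_2 − β_1²)). -/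

import Mathlib

lemma geo_aux (q : ℝ) (h0 : 0 ≤ q) (h1 : q < 1) (n : ℕ) :
    ∑ i ∈ Finset.range n, q ^ i ≤ (1 - q)⁻¹ := by
  rw [geom_sum_eq h1.ne]
  rw [div_le_iff_of_neg (by linarith : q - 1 < 0)]
  have hqn : 0 ≤ q ^ n := pow_nonneg h0 n
  have h2 : (1 - q)⁻¹ * (q - 1) = -1 := by
    rw [inv_mul_eq_div, div_eq_iff (by linarith : (1:ℝ) - q ≠ 0)]; ring
  rw [h2]; linarith

lemma reindex_aux (q : ℝ) (t : ℕ) :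
    ∑ s ∈ Finset.Icc 1 t, q ^ (t - s) = ∑ i ∈ Finset.range t, q ^ i := by
  apply Finset.sum_nbij' (fun s => t - s) (fun i => t - i)
  · intro s hs
    simp only [Finset.mem_Icc] at hs
    simp only [Finset.mem_range]; omega
  · intro i hi
    simp only [Finset.mem_range] at hi
    simp only [Finset.mem_Icc]; omega
  · intro s hs
    simp only [Finset.mem_Icc] at hs; omega
  · intro i hi
    simp only [Finset.mem_range] at hi; omega
  · intro s _; rfl

/-- Per-step bound on the third AMSGrad decomposition term:
`m_t²/√v̂_t ≤ C(β₁,β₂) √v_t ≤ C(β₁,β₂) G`, where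
`C(β₁,β₂) = β₂/((1−β₂)(β₂−β₁²))`. -/
theorem stmt13 (t : ℕ) (ht : 1 ≤ t) (g β1s : ℕ → ℝ) (β1 β2 G mt vt vhat : ℝ)
    (hG : ∀ s, |g s| ≤ G)
    (hβ1s : ∀ s, β1s s ∈ Set.Ico (0 : ℝ) 1)
    (hmono : ∀ s u, s ≤ u → β1s u ≤ β1s s)
    (hle : ∀ s, β1s s ≤ β1)
    (hβ2 : β2 ∈ Set.Ioo (0 : ℝ) 1) (hβ12 : β1 ^ 2 < β2)
    (hm : mt = ∑ s ∈ Finset.Icc 1 t,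
      (1 - β1s s) * (∏ r ∈ Finset.Icc (s + 1) t, β1s r) * g s)
    (hv : vt = (1 - β2) * ∑ s ∈ Finset.Icc 1 t, β2 ^ (t - s) * g s ^ 2)
    (hvpos : 0 < vt) (hvhat : vt ≤ vhat) :
    mt ^ 2 / Real.sqrt vhat ≤
        (β2 / ((1 - β2) * (β2 - β1 ^ 2))) * Real.sqrt vt ∧
      (β2 / ((1 - β2) * (β2 - β1 ^ 2))) * Real.sqrt vt ≤
        (β2 / ((1 - β2) * (β2 - β1 ^ 2))) * G := by
  obtain ⟨hβ2pos, hβ2lt⟩ := hβ2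
  have hβ1nn : 0 ≤ β1 := le_trans (hβ1s 0).1 (hle 0)
  set C : ℝ := β2 / ((1 - β2) * (β2 - β1 ^ 2)) with hC
  have hCpos : 0 < C := by
    apply div_pos hβ2pos
    exact mul_pos (by linarith) (by linarith)
  have hGnn : 0 ≤ G := le_trans (abs_nonneg _) (hG 0)
  -- coefficient bound
  set a : ℕ → ℝ := fun s => (1 - β1s s) * ∏ r ∈ Finset.Icc (s + 1) t, β1s r with ha
  have hann : ∀ s, 0 ≤ a s := fun s => mul_nonneg (by linarith [(hβ1s s).2])
    (Finset.prod_nonneg fun r _ => (hβ1s r).1)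
  have habd : ∀ s, a s ≤ β1 ^ (t - s) := by
    intro s
    have h1 : a s ≤ ∏ r ∈ Finset.Icc (s + 1) t, β1s r := by
      have hP := Finset.prod_nonneg (fun r (_ : r ∈ Finset.Icc (s+1) t) => (hβ1s r).1)
      show (1 - β1s s) * (∏ r ∈ Finset.Icc (s + 1) t, β1s r) ≤ _
      nlinarith [mul_nonneg (hβ1s s).1 hP]
    refine h1.trans ?_
    calc ∏ r ∈ Finset.Icc (s + 1) t, β1s r ≤ ∏ r ∈ Finset.Icc (s + 1) t, β1 :=
        Finset.prod_le_prod (fun r _ => (hβ1s r).1) (fun r _ => hle r)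
      _ = β1 ^ (t - s) := by
        rw [Finset.prod_const, Nat.card_Icc]; congr 1; omega
  set q : ℝ := β1 ^ 2 / β2 with hqdef
  have hq0 : 0 ≤ q := div_nonneg (sq_nonneg _) hβ2pos.le
  have hq1 : q < 1 := (div_lt_one hβ2pos).mpr hβ12
  -- Cauchy–Schwarz
  set w : ℕ → ℝ := fun s => Real.sqrt (β2 ^ (t - s)) with hw
  have hwpos : ∀ s, 0 < w s := fun s => Real.sqrt_pos.mpr (pow_pos hβ2pos _)
  set S : ℝ := ∑ s ∈ Finset.Icc 1 t, β2 ^ (t - s) * g s ^ 2 with hS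
  have hSnn : 0 ≤ S := Finset.sum_nonneg fun s _ =>
    mul_nonneg (pow_nonneg hβ2pos.le _) (sq_nonneg _)
  have key : mt ^ 2 ≤ C * vt := by
    have hcs := Finset.sum_mul_sq_le_sq_mul_sq (Finset.Icc 1 t)
      (fun s => a s / w s) (fun s => w s * g s)
    have hmt : mt = ∑ s ∈ Finset.Icc 1 t, (a s / w s) * (w s * g s) := by
      rw [hm]; apply Finset.sum_congr rfl; intro s _
      rw [← mul_assoc, div_mul_cancel₀ _ (hwpos s).ne']
    rw [hmt]
    refine hcs.trans ?_
    have hsum1 : ∑ s ∈ Finset.Icc 1 t, (a s / w s) ^ 2 ≤ β2 / (β2 - β1 ^ 2) := by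
      have hstep : ∀ s ∈ Finset.Icc 1 t, (a s / w s) ^ 2 ≤ q ^ (t - s) := by
        intro s _
        rw [div_pow, Real.sq_sqrt (le_of_lt (pow_pos hβ2pos _))]
        rw [hqdef, div_pow, ← pow_mul, mul_comm 2 (t - s), pow_mul]
        exact div_le_div_of_nonneg_right (pow_le_pow_left₀ (hann s) (habd s) 2)
          (pow_pos hβ2pos _).le
      refine (Finset.sum_le_sum hstep).trans ?_
      rw [reindex_aux]
      refine (geo_aux q hq0 hq1 t).trans ?_
      have heq : 1 - q = (β2 - β1 ^ 2) / β2 := by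
        rw [hqdef]; field_simp
      rw [heq, inv_div]
    have hsum2 : ∑ s ∈ Finset.Icc 1 t, (w s * g s) ^ 2 = S := by
      apply Finset.sum_congr rfl; intro s _
      rw [mul_pow, hw, Real.sq_sqrt (le_of_lt (pow_pos hβ2pos _))]
    rw [hsum2]
    have hne1 : (1 : ℝ) - β2 ≠ 0 := by linarith
    have hne2 : β2 - β1 ^ 2 ≠ 0 := by linarith
    have : C * vt = (β2 / (β2 - β1 ^ 2)) * S := by
      rw [hC, hv]
      field_simp
    rw [this]
    exact mul_le_mul_of_nonneg_right hsum1 hSnn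
  have hsv : 0 < Real.sqrt vt := Real.sqrt_pos.mpr hvpos
  constructor
  · have h1 : mt ^ 2 / Real.sqrt vhat ≤ mt ^ 2 / Real.sqrt vt :=
      div_le_div_of_nonneg_left (sq_nonneg _) hsv (Real.sqrt_le_sqrt hvhat)
    refine h1.trans ?_
    rw [div_le_iff₀ hsv]
    calc mt ^ 2 ≤ C * vt := key
      _ = C * Real.sqrt vt * Real.sqrt vt := by
        rw [mul_assoc, Real.mul_self_sqrt hvpos.le]
  · apply mul_le_mul_of_nonneg_left _ hCpos.le
    have hvG : vt ≤ G ^ 2 := by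
      rw [hv]
      have h1 : S ≤ ∑ s ∈ Finset.Icc 1 t, β2 ^ (t - s) * G ^ 2 := by
        apply Finset.sum_le_sum; intro s _
        apply mul_le_mul_of_nonneg_left _ (pow_nonneg hβ2pos.le _)
        calc g s ^ 2 = |g s| ^ 2 := (sq_abs _).symm
          _ ≤ G ^ 2 := pow_le_pow_left₀ (abs_nonneg _) (hG s) 2
      have h2 : ∑ s ∈ Finset.Icc 1 t, β2 ^ (t - s) * G ^ 2 ≤ (1 - β2)⁻¹ * G ^ 2 := by
        rw [← Finset.sum_mul]
        apply mul_le_mul_of_nonneg_right _ (sq_nonneg _)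
        rw [reindex_aux]
        exact geo_aux β2 hβ2pos.le hβ2lt t
      have h3 : S ≤ (1 - β2)⁻¹ * G ^ 2 := h1.trans h2
      calc (1 - β2) * S ≤ (1 - β2) * ((1 - β2)⁻¹ * G ^ 2) :=
          mul_le_mul_of_nonneg_left h3 (by linarith)
        _ = G ^ 2 := by
          rw [← mul_assoc, mul_inv_cancel₀ (by linarith : (1:ℝ) - β2 ≠ 0), one_mul]
    calc Real.sqrt vt ≤ Real.sqrt (G ^ 2) := Real.sqrt_le_sqrt hvG
      _ = G := Real.sqrt_sq hGnn
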